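/- With R_F as above, for any x ∈ C \ W_i there is an isomorphism of right R_F-modules x b_i R_F ≅ b_i R_F, and the right annihilators of x b_i and b_i in R_F are isomorphic as right R_F-modules. -/

import Mathlib

/-- Generators of the path algebra of the two-vertex quiver `Q_{n,m}`:
vertex idempotents `e1, e2`, arrows `c i : 1 → 2` and `b j : 2 → 1`. -/
inductive QGen (n m : ℕ) : Type
  | e1 | e2 | c (i : Fin n) | b (j : Fin m)

section

variable (k : Type) [Field k] (n m : ℕ)

/-- The generator `e₁` in the free algebra. -/
noncomputable def gE1 : FreeAlgebra k (QGen n m) := FreeAlgebra.ι k QGen.e1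

/-- The generator `e₂` in the free algebra. -/
noncomputable def gE2 : FreeAlgebra k (QGen n m) := FreeAlgebra.ι k QGen.e2

/-- The generator `c i` in the free algebra. -/
noncomputable def gC (i : Fin n) : FreeAlgebra k (QGen n m) := FreeAlgebra.ι k (QGen.c i)

/-- The generator `b j` in the free algebra. -/
noncomputable def gB (j : Fin m) : FreeAlgebra k (QGen n m) := FreeAlgebra.ι k (QGen.b j)

/-- The linear combination `∑ u i • c i` of the arrows `c i`, i.e. the identification of
the coefficient space `k^n` with the span `C` of the arrows `c₁, …, c_n`. -/
noncomputable def glc : (Fin n → k) →ₗ[k] FreeAlgebra k (QGen n m) :=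
  ∑ i : Fin n, (LinearMap.toSpanSingleton k _ (gC k n m i)).comp (LinearMap.proj i)

/-- The relations defining `R_F = kQ_{n,m}/I_F`: the path-algebra relations of the
quiver `Q_{n,m}` together with the relations `b c b' = 0`, `w · b j = 0` for `w ∈ W j`,
and `b j · v = 0` for `v ∈ V j` attached to the family
`F = {V₁, …, V_m; W₁, …, W_m}` of subspaces of `C = k^n`. -/
inductive relF (V W : Fin m → Submodule k (Fin n → k)) :
    FreeAlgebra k (QGen n m) → FreeAlgebra k (QGen n m) → Prop
  | idem1 : relF V W (gE1 k n m * gE1 k n m) (gE1 k n m)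
  | idem2 : relF V W (gE2 k n m * gE2 k n m) (gE2 k n m)
  | orth12 : relF V W (gE1 k n m * gE2 k n m) 0
  | orth21 : relF V W (gE2 k n m * gE1 k n m) 0
  | unit : relF V W (gE1 k n m + gE2 k n m) 1
  | cLeft (i : Fin n) : relF V W (gE2 k n m * gC k n m i) (gC k n m i)
  | cRight (i : Fin n) : relF V W (gC k n m i * gE1 k n m) (gC k n m i)
  | bLeft (j : Fin m) : relF V W (gE1 k n m * gB k n m j) (gB k n m j)
  | bRight (j : Fin m) : relF V W (gB k n m j * gE2 k n m) (gB k n m j)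
  | bcb (i : Fin n) (j j' : Fin m) :
      relF V W (gB k n m j * gC k n m i * gB k n m j') 0
  | wb (j : Fin m) (w : Fin n → k) (hw : w ∈ W j) :
      relF V W (glc k n m w * gB k n m j) 0
  | bv (j : Fin m) (v : Fin n → k) (hv : v ∈ V j) :
      relF V W (gB k n m j * glc k n m v) 0

/-- The algebra `R_F = kQ_{n,m}/I_F`. -/
abbrev RF (V W : Fin m → Submodule k (Fin n → k)) := RingQuot (relF k n m V W)

variable (V W : Fin m → Submodule k (Fin n → k))

/-- The projection from the free algebra onto `R_F`. -/
noncomputable def prF : FreeAlgebra k (QGen n m) →ₐ[k] RF k n m V W :=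
  RingQuot.mkAlgHom k _

/-- The idempotent `e₁` of `R_F`. -/
noncomputable def qE1 : RF k n m V W := prF k n m V W (gE1 k n m)

/-- The idempotent `e₂` of `R_F`. -/
noncomputable def qE2 : RF k n m V W := prF k n m V W (gE2 k n m)

/-- The arrow `c i` of `R_F`. -/
noncomputable def qC (i : Fin n) : RF k n m V W := prF k n m V W (gC k n m i)

/-- The arrow `b j` of `R_F`. -/
noncomputable def qB (j : Fin m) : RF k n m V W := prF k n m V W (gB k n m j)

/-- The identification of `k^n` with the span `C ⊆ R_F` of the arrows `c i`. -/
noncomputable def qlc : (Fin n → k) →ₗ[k] RF k n m V W :=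
  (prF k n m V W).toLinearMap.comp (glc k n m)

/-- Left multiplication by `x` as an endomorphism of `R_F` viewed as a right module
over itself; its range is the right ideal `x·R_F` and its kernel is the right
annihilator `rAnn(x)`. -/
noncomputable def rmul (x : RF k n m V W) :
    RF k n m V W →ₗ[(RF k n m V W)ᵐᵒᵖ] RF k n m V W where
  toFun y := x * y
  map_add' := mul_add x
  map_smul' r y := by
    simp only [RingHom.id_apply, MulOpposite.smul_eq_mul_unop]
    rw [mul_assoc]

end

section AuxProof

open MulOpposite

variable (k : Type) [Field k] (n m : ℕ) (V W : Fin m → Submodule k (Fin n → k))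

lemma rel_pr {x y : FreeAlgebra k (QGen n m)} (h : relF k n m V W x y) :
    prF k n m V W x = prF k n m V W y :=
  RingQuot.mkAlgHom_rel k h

lemma qlc_eq_sum (w : Fin n → k) :
    qlc k n m V W w = ∑ i' : Fin n, w i' • qC k n m V W i' := by
  simp [qlc, glc, qC, LinearMap.sum_apply, map_sum]

lemma qE1E2 : qE1 k n m V W * qE2 k n m V W = 0 := by
  simpa [qE1, qE2, map_mul] using rel_pr k n m V W (relF.orth12 (V := V) (W := W))

lemma qE2E1 : qE2 k n m V W * qE1 k n m V W = 0 := by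
  simpa [qE1, qE2, map_mul] using rel_pr k n m V W (relF.orth21 (V := V) (W := W))

lemma qBE2 (j : Fin m) : qB k n m V W j * qE2 k n m V W = qB k n m V W j := by
  simpa [qB, qE2, map_mul] using rel_pr k n m V W (relF.bRight (V := V) (W := W) j)

lemma qE1B (j : Fin m) : qE1 k n m V W * qB k n m V W j = qB k n m V W j := by
  simpa [qB, qE1, map_mul] using rel_pr k n m V W (relF.bLeft (V := V) (W := W) j)

lemma qCE1 (i' : Fin n) : qC k n m V W i' * qE1 k n m V W = qC k n m V W i' := by
  simpa [qC, qE1, map_mul] using rel_pr k n m V W (relF.cRight (V := V) (W := W) i')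

lemma qE2C (i' : Fin n) : qE2 k n m V W * qC k n m V W i' = qC k n m V W i' := by
  simpa [qC, qE2, map_mul] using rel_pr k n m V W (relF.cLeft (V := V) (W := W) i')

lemma qBCB (i' : Fin n) (j j' : Fin m) :
    qB k n m V W j * qC k n m V W i' * qB k n m V W j' = 0 := by
  simpa [qB, qC, map_mul] using rel_pr k n m V W (relF.bcb (V := V) (W := W) i' j j')

lemma qBV (j : Fin m) (v : Fin n → k) (hv : v ∈ V j) :
    qB k n m V W j * qlc k n m V W v = 0 := by
  simpa [qB, qlc, map_mul] using rel_pr k n m V W (relF.bv (V := V) (W := W) j v hv)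

lemma qBE1 (j : Fin m) : qB k n m V W j * qE1 k n m V W = 0 := by
  rw [← qBE2, mul_assoc, qE2E1, mul_zero]

lemma qBB (j j' : Fin m) : qB k n m V W j * qB k n m V W j' = 0 := by
  have h : qB k n m V W j * qB k n m V W j'
      = qB k n m V W j * qE2 k n m V W * (qE1 k n m V W * qB k n m V W j') := by
    rw [qBE2, qE1B]
  rw [h, mul_assoc, ← mul_assoc (qE2 k n m V W), qE2E1, zero_mul, mul_zero]

lemma qCE2 (i' : Fin n) : qC k n m V W i' * qE2 k n m V W = 0 := by
  rw [← qCE1, mul_assoc, qE1E2, mul_zero]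

lemma qCC (i' i'' : Fin n) : qC k n m V W i' * qC k n m V W i'' = 0 := by
  have h : qC k n m V W i' * qC k n m V W i''
      = qC k n m V W i' * qE1 k n m V W * (qE2 k n m V W * qC k n m V W i'') := by
    rw [qCE1, qE2C]
  rw [h, mul_assoc, ← mul_assoc (qE1 k n m V W), qE1E2, zero_mul, mul_zero]

lemma qlcE1 (w : Fin n → k) : qlc k n m V W w * qE1 k n m V W = qlc k n m V W w := by
  rw [qlc_eq_sum, Finset.sum_mul]
  simp [smul_mul_assoc, qCE1]

lemma qlcE2 (w : Fin n → k) : qlc k n m V W w * qE2 k n m V W = 0 := by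
  rw [qlc_eq_sum, Finset.sum_mul]
  simp [smul_mul_assoc, qCE2]

lemma qlcC (w : Fin n → k) (i'' : Fin n) : qlc k n m V W w * qC k n m V W i'' = 0 := by
  rw [qlc_eq_sum, Finset.sum_mul]
  simp [smul_mul_assoc, qCC]

lemma qBlcB (j j' : Fin m) (w : Fin n → k) :
    qB k n m V W j * qlc k n m V W w * qB k n m V W j' = 0 := by
  rw [qlc_eq_sum, Finset.mul_sum, Finset.sum_mul]
  simp [mul_smul_comm, smul_mul_assoc, qBCB]

end AuxProof
section AuxMod

open MulOpposite

variable (k : Type) [Field k] (n m : ℕ) (V W : Fin m → Submodule k (Fin n → k))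
variable (i : Fin m) (f : (Fin n → k) →ₗ[k] k)

/-- The underlying space of a model of the right module `e₂·R_F` (with the `CB`-components
collapsed along the functional `f`): components model `e₂`, `C`, `f(CB_i)`, `CBC_i`. -/
abbrev MM := k × (Fin n → k) × k × ((Fin n → k) ⧸ V i)

/-- Right action of `e₁` on the model. -/
noncomputable def opE1 : MM k n m V i →ₗ[k] MM k n m V i where
  toFun x := (0, x.2.1, 0, x.2.2.2)
  map_add' x y := by ext <;> simp
  map_smul' c x := by ext <;> simp

/-- Right action of `e₂` on the model. -/
noncomputable def opE2 : MM k n m V i →ₗ[k] MM k n m V i where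
  toFun x := (x.1, 0, x.2.2.1, 0)
  map_add' x y := by ext <;> simp
  map_smul' c x := by ext <;> simp

/-- Right action of an element `v` of the arrow span `C` on the model. -/
noncomputable def opGlc (v : Fin n → k) : MM k n m V i →ₗ[k] MM k n m V i where
  toFun x := (0, x.1 • v, 0, x.2.2.1 • Submodule.Quotient.mk v)
  map_add' x y := by ext <;> simp [add_smul, add_mul, mul_assoc]
  map_smul' c x := by ext <;> simp [mul_smul, mul_assoc]

/-- Right action of `b j` on the model. -/
noncomputable def opB (j : Fin m) : MM k n m V i →ₗ[k] MM k n m V i where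
  toFun x := (0, 0, if j = i then f x.2.1 else 0, 0)
  map_add' x y := by by_cases h : j = i <;> ext <;> simp [h]
  map_smul' c x := by by_cases h : j = i <;> ext <;> simp [h]

/-- Assignment of generators to operators. -/
noncomputable def gens : QGen n m → Module.End k (MM k n m V i)
  | .e1 => opE1 k n m V i
  | .e2 => opE2 k n m V i
  | .c i' => opGlc k n m V i (Pi.single i' 1)
  | .b j => opB k n m V i f j

/-- The induced algebra map on the free algebra (valued in the opposite of endomorphisms,
so that it defines a right action). -/
noncomputable def rep0 : FreeAlgebra k (QGen n m) →ₐ[k] (Module.End k (MM k n m V i))ᵐᵒᵖ :=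
  FreeAlgebra.lift k fun g => op (gens k n m V i f g)

@[simp] lemma rep0_e1 : rep0 k n m V i f (gE1 k n m) = op (opE1 k n m V i) := by
  simp [rep0, gE1, gens]

@[simp] lemma rep0_e2 : rep0 k n m V i f (gE2 k n m) = op (opE2 k n m V i) := by
  simp [rep0, gE2, gens]

@[simp] lemma rep0_c (i' : Fin n) :
    rep0 k n m V i f (gC k n m i') = op (opGlc k n m V i (Pi.single i' 1)) := by
  simp [rep0, gC, gens]

@[simp] lemma rep0_b (j : Fin m) :
    rep0 k n m V i f (gB k n m j) = op (opB k n m V i f j) := by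
  simp [rep0, gB, gens]

lemma single_sum (w : Fin n → k) :
    ∑ i' : Fin n, w i' • (Pi.single i' 1 : Fin n → k) = w := by
  have h : ∀ i' : Fin n, w i' • (Pi.single i' 1 : Fin n → k) = Pi.single i' (w i') := by
    intro i'
    rw [← Pi.single_smul, smul_eq_mul, mul_one]
  rw [Finset.sum_congr rfl fun i' _ => h i', Finset.univ_sum_single]

/-- The action of `C` bundled as a linear map in the `C`-variable. -/
noncomputable def opGlcL : (Fin n → k) →ₗ[k] Module.End k (MM k n m V i) where
  toFun v := opGlc k n m V i v
  map_add' v v' := by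
    apply LinearMap.ext; intro x
    ext <;> simp [opGlc, mul_add, Submodule.Quotient.mk_add, smul_add]
  map_smul' c v := by
    apply LinearMap.ext; intro x
    ext <;> simp [opGlc, Submodule.Quotient.mk_smul, smul_comm x.2.2.1 c, mul_left_comm]

lemma rep0_glc (w : Fin n → k) :
    rep0 k n m V i f (glc k n m w) = op (opGlc k n m V i w) := by
  have hg : glc k n m w = ∑ i' : Fin n, w i' • gC k n m i' := by
    simp [glc, LinearMap.sum_apply]
  rw [hg, map_sum]
  simp only [map_smul, rep0_c]
  apply unop_injective
  simp only [Finset.unop_sum, unop_smul, unop_op]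
  have hre : ∀ i' : Fin n,
      opGlc k n m V i (Pi.single i' 1) = opGlcL k n m V i (Pi.single i' 1) := fun _ => rfl
  have hw : opGlc k n m V i w = opGlcL k n m V i w := rfl
  rw [hw, ← single_sum k n w, map_sum]
  simp only [hre, map_smul]
  rw [single_sum]

end AuxMod
section AuxRho

open MulOpposite

variable (k : Type) [Field k] (n m : ℕ) (V W : Fin m → Submodule k (Fin n → k))
variable (i : Fin m) (f : (Fin n → k) →ₗ[k] k)

@[simp] lemma opE1_apply (x : MM k n m V i) :
    opE1 k n m V i x = (0, x.2.1, 0, x.2.2.2) := rfl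

@[simp] lemma opE2_apply (x : MM k n m V i) :
    opE2 k n m V i x = (x.1, 0, x.2.2.1, 0) := rfl

@[simp] lemma opGlc_apply (v : Fin n → k) (x : MM k n m V i) :
    opGlc k n m V i v x = (0, x.1 • v, 0, x.2.2.1 • Submodule.Quotient.mk v) := rfl

@[simp] lemma opB_apply (j : Fin m) (x : MM k n m V i) :
    opB k n m V i f j x = (0, 0, if j = i then f x.2.1 else 0, 0) := rfl

lemma qlc_single (i' : Fin n) :
    qlc k n m V W (Pi.single i' 1) = qC k n m V W i' := by
  rw [qlc_eq_sum]
  rw [Finset.sum_eq_single i' (fun b _ hb => by simp [Pi.single_apply, (Ne.symm hb)])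
    (fun h => absurd (Finset.mem_univ i') h)]
  simp

lemma rep0_rel (hf0 : ∀ w ∈ W i, f w = 0) :
    ∀ ⦃x y⦄, relF k n m V W x y → rep0 k n m V i f x = rep0 k n m V i f y := by
  intro x y h
  induction h with
  | idem1 =>
    apply unop_injective; apply LinearMap.ext; intro x
    simp [map_mul, unop_mul, Module.End.mul_apply]
  | idem2 =>
    apply unop_injective; apply LinearMap.ext; intro x
    simp [map_mul, unop_mul, Module.End.mul_apply]
  | orth12 =>
    apply unop_injective; apply LinearMap.ext; intro x
    simp [map_mul, unop_mul, Module.End.mul_apply]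
  | orth21 =>
    apply unop_injective; apply LinearMap.ext; intro x
    simp [map_mul, unop_mul, Module.End.mul_apply]
  | unit =>
    apply unop_injective; apply LinearMap.ext; intro x
    simp [map_add, unop_add, LinearMap.add_apply, Prod.ext_iff]
  | cLeft i' =>
    apply unop_injective; apply LinearMap.ext; intro x
    simp [map_mul, unop_mul, Module.End.mul_apply]
  | cRight i' =>
    apply unop_injective; apply LinearMap.ext; intro x
    simp [map_mul, unop_mul, Module.End.mul_apply]
  | bLeft j =>
    apply unop_injective; apply LinearMap.ext; intro x
    simp [map_mul, unop_mul, Module.End.mul_apply]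
  | bRight j =>
    apply unop_injective; apply LinearMap.ext; intro x
    simp [map_mul, unop_mul, Module.End.mul_apply]
  | bcb i' j j' =>
    apply unop_injective; apply LinearMap.ext; intro x
    simp [map_mul, unop_mul, Module.End.mul_apply]
  | wb j w hw =>
    apply unop_injective; apply LinearMap.ext; intro x
    rw [map_mul, rep0_glc]
    by_cases hj : j = i
    · subst hj
      simp [unop_mul, Module.End.mul_apply, hf0 w hw]
    · simp [unop_mul, Module.End.mul_apply, hj]
  | bv j v hv =>
    apply unop_injective; apply LinearMap.ext; intro x
    rw [map_mul, rep0_glc]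
    by_cases hj : j = i
    · subst hj
      have hmk : (Submodule.Quotient.mk v : _ ⧸ V j) = 0 :=
        (Submodule.Quotient.mk_eq_zero _).2 hv
      simp [unop_mul, Module.End.mul_apply, hmk]
    · simp [unop_mul, Module.End.mul_apply, hj]

/-- The representation of `R_F` on the model. -/
noncomputable def rho (hf0 : ∀ w ∈ W i, f w = 0) :
    RF k n m V W →ₐ[k] (Module.End k (MM k n m V i))ᵐᵒᵖ :=
  RingQuot.liftAlgHom k ⟨rep0 k n m V i f, rep0_rel k n m V W i f hf0⟩

lemma rho_pr (hf0 : ∀ w ∈ W i, f w = 0) (x : FreeAlgebra k (QGen n m)) :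
    rho k n m V W i f hf0 (prF k n m V W x) = rep0 k n m V i f x := by
  simp [rho, prF, RingQuot.liftAlgHom_mkAlgHom_apply]

/-- The partial inverse: from the model back to `R_F` (only right-linear on the
relevant submodule). -/
noncomputable def bq : ((Fin n → k) ⧸ V i) →ₗ[k] RF k n m V W :=
  Submodule.liftQ (V i) ((LinearMap.mulLeft k (qB k n m V W i)).comp (qlc k n m V W))
    (by
      intro v hv
      simp only [LinearMap.mem_ker, LinearMap.comp_apply, LinearMap.mulLeft_apply]
      exact qBV k n m V W i v hv)

@[simp] lemma bq_mk (v : Fin n → k) :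
    bq k n m V W i (Submodule.Quotient.mk v) = qB k n m V W i * qlc k n m V W v := by
  simp [bq]

noncomputable def theta : MM k n m V i →ₗ[k] RF k n m V W where
  toFun x := x.2.2.1 • qB k n m V W i + bq k n m V W i x.2.2.2
  map_add' x y := by
    simp only [Prod.snd_add, Prod.fst_add, add_smul, map_add]
    abel
  map_smul' c x := by
    simp only [Prod.smul_snd, Prod.smul_fst, smul_eq_mul, mul_smul, map_smul,
      RingHom.id_apply, smul_add]

@[simp] lemma theta_apply (x : MM k n m V i) :
    theta k n m V W i x = x.2.2.1 • qB k n m V W i + bq k n m V W i x.2.2.2 := rfl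

end AuxRho
section AuxKey

open MulOpposite

variable (k : Type) [Field k] (n m : ℕ) (V W : Fin m → Submodule k (Fin n → k))
variable (i : Fin m) (f : (Fin n → k) →ₗ[k] k)

lemma key_intertwine (hf0 : ∀ w ∈ W i, f w = 0) (s : RF k n m V W) :
    ∀ x : MM k n m V i, x.1 = 0 → x.2.1 = 0 →
      ((rho k n m V W i f hf0 s).unop x).1 = 0 ∧
      ((rho k n m V W i f hf0 s).unop x).2.1 = 0 ∧
      theta k n m V W i ((rho k n m V W i f hf0 s).unop x)
        = theta k n m V W i x * s := by
  obtain ⟨a, rfl⟩ := RingQuot.mkAlgHom_surjective k _ (show RingQuot (relF k n m V W) from s)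
  show ∀ x : MM k n m V i, _
  induction a using FreeAlgebra.induction with
  | grade0 r =>
    intro x h1 h2
    rw [show (RingQuot.mkAlgHom k (relF k n m V W)) (algebraMap k _ r)
        = prF k n m V W (algebraMap k _ r) from rfl, AlgHom.commutes, AlgHom.commutes,
      MulOpposite.algebraMap_apply, unop_op]
    refine ⟨?_, ?_, ?_⟩
    · rw [Module.algebraMap_end_apply, Prod.smul_fst, h1, smul_zero]
    · rw [Module.algebraMap_end_apply, Prod.smul_snd, Prod.smul_fst, h2, smul_zero]
    · rw [Module.algebraMap_end_apply, map_smul, Algebra.smul_def, Algebra.commutes]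
  | grade1 g =>
    rintro ⟨x1, x2, x3, x4⟩ h1 h2
    simp only at h1 h2
    subst h1; subst h2
    obtain ⟨w, rfl⟩ := Submodule.Quotient.mk_surjective (V i) x4
    cases g with
    | e1 =>
      rw [show (RingQuot.mkAlgHom k (relF k n m V W)) (FreeAlgebra.ι k QGen.e1)
          = prF k n m V W (gE1 k n m) from rfl, rho_pr, rep0_e1, unop_op]
      refine ⟨rfl, rfl, ?_⟩
      show theta k n m V W i ((0 : k), (0 : Fin n → k), (0:k), Submodule.Quotient.mk w)
        = theta k n m V W i ((0 : k), (0 : Fin n → k), x3, Submodule.Quotient.mk w)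
          * qE1 k n m V W
      simp only [theta_apply, bq_mk, zero_smul, zero_add, add_mul, smul_mul_assoc,
        mul_assoc, qBE1, qlcE1, smul_zero, zero_add]
    | e2 =>
      rw [show (RingQuot.mkAlgHom k (relF k n m V W)) (FreeAlgebra.ι k QGen.e2)
          = prF k n m V W (gE2 k n m) from rfl, rho_pr, rep0_e2, unop_op]
      refine ⟨rfl, rfl, ?_⟩
      show theta k n m V W i ((0 : k), (0 : Fin n → k), x3, (0 : (Fin n → k) ⧸ V i))
        = theta k n m V W i ((0 : k), (0 : Fin n → k), x3, Submodule.Quotient.mk w)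
          * qE2 k n m V W
      simp only [theta_apply, bq_mk, map_zero, add_zero, add_mul, smul_mul_assoc,
        mul_assoc, qBE2, qlcE2, mul_zero, add_zero]
    | c i' =>
      rw [show (RingQuot.mkAlgHom k (relF k n m V W)) (FreeAlgebra.ι k (QGen.c i'))
          = prF k n m V W (gC k n m i') from rfl, rho_pr, rep0_c, unop_op]
      refine ⟨rfl, by simp, ?_⟩
      show theta k n m V W i ((0 : k), (0:k) • (Pi.single i' 1 : Fin n → k), (0:k),
          x3 • (Submodule.Quotient.mk (Pi.single i' 1) : (Fin n → k) ⧸ V i))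
        = theta k n m V W i ((0 : k), (0 : Fin n → k), x3, Submodule.Quotient.mk w)
          * qC k n m V W i'
      simp only [theta_apply, bq_mk, map_smul, zero_smul, zero_add, add_mul,
        smul_mul_assoc, mul_assoc, qlcC, mul_zero, add_zero, qlc_single, smul_zero]
    | b j =>
      rw [show (RingQuot.mkAlgHom k (relF k n m V W)) (FreeAlgebra.ι k (QGen.b j))
          = prF k n m V W (gB k n m j) from rfl, rho_pr, rep0_b, unop_op]
      refine ⟨rfl, rfl, ?_⟩
      show theta k n m V W i ((0 : k), (0 : Fin n → k),
          (if j = i then f 0 else 0), (0 : (Fin n → k) ⧸ V i))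
        = theta k n m V W i ((0 : k), (0 : Fin n → k), x3, Submodule.Quotient.mk w)
          * qB k n m V W j
      have hz : (if j = i then f 0 else 0) = (0:k) := by
        by_cases hj : j = i <;> simp [hj]
      rw [hz]
      simp only [theta_apply, bq_mk, map_zero, zero_smul, zero_add, add_zero, add_mul,
        smul_mul_assoc, qBB, smul_zero, qBlcB, zero_add]
  | mul a b ha hb =>
    intro x h1 h2
    have hcomp : ∀ y : MM k n m V i,
        (rho k n m V W i f hf0 ((RingQuot.mkAlgHom k (relF k n m V W)) (a * b))).unop y
        = (rho k n m V W i f hf0 ((RingQuot.mkAlgHom k (relF k n m V W)) b)).unop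
          ((rho k n m V W i f hf0 ((RingQuot.mkAlgHom k (relF k n m V W)) a)).unop y) := by
      intro y
      rw [map_mul, map_mul, unop_mul, Module.End.mul_apply]
    obtain ⟨m1, m2, m3⟩ := ha x h1 h2
    obtain ⟨m1', m2', m3'⟩ := hb _ m1 m2
    refine ⟨by rw [hcomp]; exact m1', by rw [hcomp]; exact m2', ?_⟩
    rw [hcomp, m3', m3, map_mul, mul_assoc]
  | add a b ha hb =>
    intro x h1 h2
    have hsum : (rho k n m V W i f hf0 ((RingQuot.mkAlgHom k (relF k n m V W)) (a + b))).unop x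
        = (rho k n m V W i f hf0 ((RingQuot.mkAlgHom k (relF k n m V W)) a)).unop x
        + (rho k n m V W i f hf0 ((RingQuot.mkAlgHom k (relF k n m V W)) b)).unop x := by
      rw [map_add, map_add, unop_add, LinearMap.add_apply]
    obtain ⟨m1, m2, m3⟩ := ha x h1 h2
    obtain ⟨m1', m2', m3'⟩ := hb x h1 h2
    refine ⟨?_, ?_, ?_⟩
    · rw [hsum, Prod.fst_add, m1, m1', add_zero]
    · rw [hsum, Prod.snd_add, Prod.fst_add, m2, m2', add_zero]
    · rw [hsum, map_add, m3, m3', map_add, mul_add]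

lemma key_ann (hf0 : ∀ w ∈ W i, f w = 0) (u : Fin n → k) (hf1 : f u = 1)
    (s : RF k n m V W)
    (hs : qlc k n m V W u * qB k n m V W i * s = 0) :
    qB k n m V W i * s = 0 := by
  have hnu : (rho k n m V W i f hf0 (qlc k n m V W u * qB k n m V W i)).unop
      ((1:k), (0 : Fin n → k), (0:k), (0 : (Fin n → k) ⧸ V i))
      = ((0:k), (0 : Fin n → k), (1:k), (0 : (Fin n → k) ⧸ V i)) := by
    have h1 : qlc k n m V W u * qB k n m V W i
        = prF k n m V W (glc k n m u * gB k n m i) := by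
      rw [map_mul]; rfl
    rw [h1, rho_pr, map_mul, rep0_glc, rep0_b, unop_mul, unop_op, unop_op,
      Module.End.mul_apply]
    simp [hf1]
  have hzero : (rho k n m V W i f hf0 s).unop
      ((0:k), (0 : Fin n → k), (1:k), (0 : (Fin n → k) ⧸ V i)) = 0 := by
    have h2 : (rho k n m V W i f hf0 (qlc k n m V W u * qB k n m V W i * s)).unop
        ((1:k), (0 : Fin n → k), (0:k), (0 : (Fin n → k) ⧸ V i))
        = (rho k n m V W i f hf0 s).unop
          ((rho k n m V W i f hf0 (qlc k n m V W u * qB k n m V W i)).unop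
            ((1:k), (0 : Fin n → k), (0:k), (0 : (Fin n → k) ⧸ V i))) := by
      rw [map_mul, unop_mul, Module.End.mul_apply]
    rw [hnu] at h2
    rw [← h2, hs, map_zero, unop_zero, LinearMap.zero_apply]
  obtain ⟨-, -, h3⟩ := key_intertwine k n m V W i f hf0 s
    ((0:k), (0 : Fin n → k), (1:k), (0 : (Fin n → k) ⧸ V i)) rfl rfl
  rw [hzero, map_zero] at h3
  have h4 : theta k n m V W i
      ((0:k), (0 : Fin n → k), (1:k), (0 : (Fin n → k) ⧸ V i)) = qB k n m V W i := by
    simp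
  rw [h4] at h3
  exact h3.symm

end AuxKey

/-- For `R_F = kQ_{n,m}/I_F` and any `x ∈ C \ W i` (written `x = ∑ u i • c i` with
`u ∉ W i`), there are isomorphisms of right `R_F`-modules `x b_i R_F ≅ b_i R_F` and
`rAnn(x b_i) ≅ rAnn(b_i)`.  (The right ideal `r·R_F` is the range, and the right
annihilator of `r` the kernel, of left multiplication `rmul r` viewed as an endomorphism
of `R_F` as a right module over itself.) -/
theorem stmt_10 (k : Type) [Field k] (n m : ℕ)
    (V W : Fin m → Submodule k (Fin n → k))
    (i : Fin m) (u : Fin n → k) (hu : u ∉ W i) :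
    Nonempty
      (↥(LinearMap.range (rmul k n m V W (qlc k n m V W u * qB k n m V W i))) ≃ₗ[(RF k n m V W)ᵐᵒᵖ]
       ↥(LinearMap.range (rmul k n m V W (qB k n m V W i)))) ∧
    Nonempty
      (↥(LinearMap.ker (rmul k n m V W (qlc k n m V W u * qB k n m V W i))) ≃ₗ[(RF k n m V W)ᵐᵒᵖ]
       ↥(LinearMap.ker (rmul k n m V W (qB k n m V W i)))) := by
  have hmk : (Submodule.Quotient.mk u : (Fin n → k) ⧸ W i) ≠ 0 := by
    simpa [Submodule.Quotient.mk_eq_zero] using hu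
  obtain ⟨g, hg⟩ := (LinearMap.toSpanSingleton k ((Fin n → k) ⧸ W i)
      (Submodule.Quotient.mk u)).exists_leftInverse_of_injective
      (LinearMap.ker_toSpanSingleton k hmk)
  set f : (Fin n → k) →ₗ[k] k := g.comp (W i).mkQ with hf
  have hf0 : ∀ w ∈ W i, f w = 0 := by
    intro w hw
    simp [hf, Submodule.mkQ_apply, (Submodule.Quotient.mk_eq_zero _).2 hw]
  have hf1 : f u = 1 := by
    have h1 := LinearMap.congr_fun hg 1
    simpa [hf, LinearMap.toSpanSingleton_apply, Submodule.mkQ_apply] using h1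
  have hker : LinearMap.ker (rmul k n m V W (qlc k n m V W u * qB k n m V W i))
      = LinearMap.ker (rmul k n m V W (qB k n m V W i)) := by
    ext s
    simp only [LinearMap.mem_ker]
    constructor
    · intro h
      show qB k n m V W i * s = 0
      exact key_ann k n m V W i f hf0 u hf1 s h
    · intro h
      show qlc k n m V W u * qB k n m V W i * s = 0
      have h' : qB k n m V W i * s = 0 := h
      rw [mul_assoc, h', mul_zero]
  refine ⟨⟨?_⟩, ⟨LinearEquiv.ofEq _ _ hker⟩⟩
  exact (LinearMap.quotKerEquivRange _).symm.trans
    ((Submodule.quotEquivOfEq _ _ hker).trans (LinearMap.quotKerEquivRange _))
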